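/- arXiv:2101.10754 — 2 statements merged into one kernel-verified Lean document; each statement's English description precedes it below -/
import Mathlib

section
/- Let m, t be nonnegative integers with m + t ≥ 1, and let f_1,…,f_m, l_1,…,l_t, c, ε be real constants with 0 < f_i < 1 for all i, 0 < l_j < 1 for all j, 0 < c < 1, and 0 < ε < min{ log_{c/(2(m+t))}(1−f_1), …, log_{c/(2(m+t))}(1−f_m), log_{c/(2(m+t))}(1−l_1), …, log_{c/(2(m+t))}(1−l_t) }. Let T be an ε-critical tournament with |T| = n, and let S_1,…,S_m, P_1,…,P_t be m + t pairwise vertex-disjoint transitive induced subtournaments of T with |S_i| ≥ f_i·tr(T) for i = 1,…,m and |P_j| ≥ l_j·tr(T) for j = 1,…,t. Let A ⊆ V(T) \ (V(S_1) ∪ … ∪ V(S_m) ∪ V(P_1) ∪ … ∪ V(P_t)) with |A| ≥ cn. Then there exist vertices g ∈ A, s_i ∈ V(S_i) for i = 1,…,m and p_j ∈ V(P_j) for j = 1,…,t such that (g, s_i) is an arc of T for every i = 1,…,m and (p_j, g) is an arc of T for every j = 1,…,t. -/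
open Finset

/-- A tournament on vertex set `Fin n`: `adj u v` means there is an arc from `u` to `v`. -/
structure Tournament (n : ℕ) where
  adj : Fin n → Fin n → Prop
  asymm : ∀ u v, adj u v → ¬ adj v u
  total : ∀ u v, u ≠ v → adj u v ∨ adj v u

namespace Tournament

variable {n N : ℕ}

/-- The position of vertex `v` in the ordering `θ`, where `θ k` is the `k`-th vertex. -/
def pos (θ : Equiv.Perm (Fin n)) (v : Fin n) : Fin n := θ.symm v

/-- The arc `u → v` of `T` is a backward arc under the ordering `θ`. -/
def Backward (T : Tournament n) (θ : Equiv.Perm (Fin n)) (u v : Fin n) : Prop :=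
  T.adj u v ∧ pos θ v < pos θ u

/-- `x` lies strictly between two elements of `L` under the ordering `θ`. -/
def BetweenSet (θ : Equiv.Perm (Fin n)) (L : Finset (Fin n)) (x : Fin n) : Prop :=
  ∃ u ∈ L, ∃ w ∈ L, pos θ u < pos θ x ∧ pos θ x < pos θ w

/-- The induced subtournament of `T` on `s` is transitive. -/
def IsTransOn (T : Tournament n) (s : Finset (Fin n)) : Prop :=
  ∀ u ∈ s, ∀ v ∈ s, ∀ w ∈ s, T.adj u v → T.adj v w → T.adj u w

/-- The largest size of a transitive subtournament of `T` contained in `s`. -/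
noncomputable def trSizeOn (T : Tournament n) (s : Finset (Fin n)) : ℕ :=
  sSup {k | ∃ t, t ⊆ s ∧ T.IsTransOn t ∧ t.card = k}

/-- `tr(T)`: the largest size of a transitive subtournament of `T`. -/
noncomputable def trSize (T : Tournament n) : ℕ := T.trSizeOn Finset.univ

/-- `T` contains `H`: some induced subtournament of `T` is isomorphic to `H`. -/
def Contains (T : Tournament N) (H : Tournament n) : Prop :=
  ∃ f : Fin n ↪ Fin N, ∀ u v, H.adj u v ↔ T.adj (f u) (f v)

/-- `T` is `ε`-critical. -/
def EpsCritical (T : Tournament n) (ε : ℝ) : Prop :=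
  ((T.trSize : ℝ) < (n : ℝ) ^ ε) ∧
  ∀ s : Finset (Fin n), s ≠ Finset.univ → ((s.card : ℝ) ^ ε ≤ (T.trSizeOn s : ℝ))

/-- `S` with center `c` is a right star of `T` under `θ`. -/
def IsRightStarAt (T : Tournament n) (θ : Equiv.Perm (Fin n)) (S : Finset (Fin n))
    (c : Fin n) : Prop :=
  c ∈ S ∧ (S.erase c).Nonempty ∧
  (∀ v ∈ S.erase c, pos θ v < pos θ c ∧ T.adj c v) ∧
  (∀ u ∈ S, ∀ v ∈ S, T.Backward θ u v → u = c)

/-- `S` with center `c` is a left star of `T` under `θ`. -/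
def IsLeftStarAt (T : Tournament n) (θ : Equiv.Perm (Fin n)) (S : Finset (Fin n))
    (c : Fin n) : Prop :=
  c ∈ S ∧ (S.erase c).Nonempty ∧
  (∀ v ∈ S.erase c, pos θ c < pos θ v ∧ T.adj v c) ∧
  (∀ u ∈ S, ∀ v ∈ S, T.Backward θ u v → v = c)

/-- `S` with center `c` is a middle star of `T` under `θ`. -/
def IsMiddleStarAt (T : Tournament n) (θ : Equiv.Perm (Fin n)) (S : Finset (Fin n))
    (c : Fin n) : Prop :=
  c ∈ S ∧
  (∃ v ∈ S.erase c, pos θ v < pos θ c) ∧ (∃ v ∈ S.erase c, pos θ c < pos θ v) ∧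
  (∀ v ∈ S.erase c, (pos θ v < pos θ c → T.adj c v) ∧ (pos θ c < pos θ v → T.adj v c)) ∧
  (∀ u ∈ S, ∀ v ∈ S, T.Backward θ u v → u = c ∨ v = c)

def IsFrontierStarAt (T : Tournament n) (θ : Equiv.Perm (Fin n)) (S : Finset (Fin n))
    (c : Fin n) : Prop :=
  T.IsLeftStarAt θ S c ∨ T.IsRightStarAt θ S c

def IsStarAt (T : Tournament n) (θ : Equiv.Perm (Fin n)) (S : Finset (Fin n))
    (c : Fin n) : Prop :=
  T.IsLeftStarAt θ S c ∨ T.IsRightStarAt θ S c ∨ T.IsMiddleStarAt θ S c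

/-- A middle star with exactly one leaf after the center (center is `u_{p-1}`). -/
def IsOneRightMiddleStarAt (T : Tournament n) (θ : Equiv.Perm (Fin n)) (S : Finset (Fin n))
    (c : Fin n) : Prop :=
  T.IsMiddleStarAt θ S c ∧ ((S.erase c).filter (fun v => pos θ c < pos θ v)).card = 1

/-- A middle star with exactly one leaf before the center (center is `u_2`). -/
def IsOneLeftMiddleStarAt (T : Tournament n) (θ : Equiv.Perm (Fin n)) (S : Finset (Fin n))
    (c : Fin n) : Prop :=
  T.IsMiddleStarAt θ S c ∧ ((S.erase c).filter (fun v => pos θ v < pos θ c)).card = 1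

/-- Kinds of super 2-nebulas. -/
inductive NebKind
  | left
  | middle
  | right

/-- Common requirements on the data of a super 2-nebula: vertex set `S`, centers `c₁, c₂`
(`c₁` before `c₂` under `θ`), leaves `L₁` incident to `c₁` and `L₂` incident to `c₂`. -/
def Super2NebCommon (θ : Equiv.Perm (Fin n)) (S : Finset (Fin n)) (c₁ c₂ : Fin n)
    (L₁ L₂ : Finset (Fin n)) : Prop :=
  L₁.Nonempty ∧ L₂.Nonempty ∧ Disjoint L₁ L₂ ∧
  c₁ ∉ L₁ ∪ L₂ ∧ c₂ ∉ L₁ ∪ L₂ ∧ c₁ ≠ c₂ ∧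
  S = insert c₁ (insert c₂ (L₁ ∪ L₂)) ∧ pos θ c₁ < pos θ c₂

/-- `S` is a super (left/middle/right) 2-nebula of `T` under `θ`, with centers `c₁, c₂` and
leaves `L₁` (incident to `c₁`) and `L₂` (incident to `c₂`). -/
def IsSuper2NebulaAt (T : Tournament n) (θ : Equiv.Perm (Fin n)) (S : Finset (Fin n))
    (c₁ c₂ : Fin n) (L₁ L₂ : Finset (Fin n)) : NebKind → Prop
  | NebKind.middle =>
      Super2NebCommon θ S c₁ c₂ L₁ L₂ ∧
      (∀ v ∈ L₁ ∪ L₂, pos θ c₁ < pos θ v ∧ pos θ v < pos θ c₂) ∧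
      (∀ v ∈ L₁, T.adj v c₁) ∧ (∀ v ∈ L₂, T.adj c₂ v) ∧ T.adj c₂ c₁ ∧
      (∀ u ∈ S, ∀ v ∈ S, T.Backward θ u v →
        (u ∈ L₁ ∧ v = c₁) ∨ (u = c₂ ∧ v ∈ L₂) ∨ (u = c₂ ∧ v = c₁))
  | NebKind.left =>
      Super2NebCommon θ S c₁ c₂ L₁ L₂ ∧
      (∀ v ∈ L₁ ∪ L₂, pos θ v < pos θ c₁) ∧
      (∀ v ∈ L₁, T.adj c₁ v) ∧ (∀ v ∈ L₂, T.adj c₂ v) ∧ T.adj c₂ c₁ ∧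
      (∀ u ∈ S, ∀ v ∈ S, T.Backward θ u v →
        (u = c₁ ∧ v ∈ L₁) ∨ (u = c₂ ∧ v ∈ L₂) ∨ (u = c₂ ∧ v = c₁))
  | NebKind.right =>
      Super2NebCommon θ S c₁ c₂ L₁ L₂ ∧
      (∀ v ∈ L₁ ∪ L₂, pos θ c₂ < pos θ v) ∧
      (∀ v ∈ L₁, T.adj v c₁) ∧ (∀ v ∈ L₂, T.adj v c₂) ∧ T.adj c₂ c₁ ∧
      (∀ u ∈ S, ∀ v ∈ S, T.Backward θ u v →
        (u ∈ L₁ ∧ v = c₁) ∨ (u ∈ L₂ ∧ v = c₂) ∨ (u = c₂ ∧ v = c₁))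

/-- A decomposition of `T` witnessing that `T` is a super nebula under `θ`, with stars
`Q i` (centers `ctr i`) and super 2-nebulas `Sig i` (centers `c₁ i, c₂ i`, leaves
`L₁ i, L₂ i`, of kind `kd i`). -/
def SuperNebulaDecomp (T : Tournament n) (θ : Equiv.Perm (Fin n)) {m l : ℕ}
    (Q : Fin m → Finset (Fin n)) (ctr : Fin m → Fin n)
    (Sig : Fin l → Finset (Fin n)) (c₁ c₂ : Fin l → Fin n)
    (L₁ L₂ : Fin l → Finset (Fin n)) (kd : Fin l → NebKind) : Prop :=
  (∀ i, T.IsStarAt θ (Q i) (ctr i)) ∧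
  (∀ i, T.IsSuper2NebulaAt θ (Sig i) (c₁ i) (c₂ i) (L₁ i) (L₂ i) (kd i)) ∧
  (∀ i j, i ≠ j → Disjoint (Q i) (Q j)) ∧
  (∀ i j, i ≠ j → Disjoint (Sig i) (Sig j)) ∧
  (∀ i j, Disjoint (Q i) (Sig j)) ∧
  (∀ u v, T.Backward θ u v → (∃ i, u ∈ Q i ∧ v ∈ Q i) ∨ (∃ i, u ∈ Sig i ∧ v ∈ Sig i)) ∧
  (∀ i j, ¬ BetweenSet θ (L₁ j ∪ L₂ j) (ctr i)) ∧
  (∀ i j, i ≠ j → ¬ BetweenSet θ (L₁ j ∪ L₂ j) (c₁ i) ∧ ¬ BetweenSet θ (L₁ j ∪ L₂ j) (c₂ i))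

/-- `T` is a super nebula. -/
def IsSuperNebula (T : Tournament n) : Prop :=
  ∃ (θ : Equiv.Perm (Fin n)) (m l : ℕ) (Q : Fin m → Finset (Fin n)) (ctr : Fin m → Fin n)
    (Sig : Fin l → Finset (Fin n)) (c₁ c₂ : Fin l → Fin n)
    (L₁ L₂ : Fin l → Finset (Fin n)) (kd : Fin l → NebKind),
    SuperNebulaDecomp T θ Q ctr Sig c₁ c₂ L₁ L₂ kd

/-- `{a, b, c}` (in this position order) is a triangle of `T` under `θ`:
`a` is the left exterior, `b` the center, `c` the right exterior. -/
def IsTriangleAt (T : Tournament n) (θ : Equiv.Perm (Fin n)) (a b c : Fin n) : Prop :=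
  pos θ a < pos θ b ∧ pos θ b < pos θ c ∧ T.adj b a ∧ T.adj c a ∧ T.adj c b

/-- A decomposition of `T` under `θ` into triangles `{A i, B i, C i}` (left exterior, center,
right exterior) and frontier stars `Q j` with centers `ctr j`, where for each triangle `i`,
the vertices in `forb i` are not allowed to lie between leaves of a star. -/
def TriGalaxyDecomp (T : Tournament n) (θ : Equiv.Perm (Fin n)) {l k : ℕ}
    (A B C : Fin l → Fin n) (Q : Fin k → Finset (Fin n)) (ctr : Fin k → Fin n)
    (forb : Fin l → Finset (Fin n)) : Prop :=
  (∀ i, T.IsTriangleAt θ (A i) (B i) (C i)) ∧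
  (∀ j, T.IsFrontierStarAt θ (Q j) (ctr j)) ∧
  (∀ i j, i ≠ j →
    Disjoint ({A i, B i, C i} : Finset (Fin n)) ({A j, B j, C j} : Finset (Fin n))) ∧
  (∀ i j, Disjoint ({A i, B i, C i} : Finset (Fin n)) (Q j)) ∧
  (∀ i j, i ≠ j → Disjoint (Q i) (Q j)) ∧
  (∀ u v, T.Backward θ u v →
    (∃ i, u ∈ ({A i, B i, C i} : Finset (Fin n)) ∧ v ∈ ({A i, B i, C i} : Finset (Fin n))) ∨
    (∃ j, u ∈ Q j ∧ v ∈ Q j)) ∧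
  (∀ i j, i ≠ j → ¬ BetweenSet θ ((Q j).erase (ctr j)) (ctr i)) ∧
  (∀ i j, ∀ x ∈ forb i, ¬ BetweenSet θ ((Q j).erase (ctr j)) x)

/-- `T` is a Δgalaxy: a triangular galaxy with exactly one triangle. -/
def IsDeltaGalaxy (T : Tournament n) : Prop :=
  ∃ (θ : Equiv.Perm (Fin n)) (a b c : Fin n) (k : ℕ)
    (Q : Fin k → Finset (Fin n)) (ctr : Fin k → Fin n),
    TriGalaxyDecomp T θ (fun _ : Fin 1 => a) (fun _ => b) (fun _ => c) Q ctr
      (fun _ => ({a, b, c} : Finset (Fin n)))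

/-- `T` is a central triangular galaxy: centers of triangles may lie between leaves of stars. -/
def IsCentralTriangularGalaxy (T : Tournament n) : Prop :=
  ∃ (θ : Equiv.Perm (Fin n)) (l k : ℕ) (A B C : Fin l → Fin n)
    (Q : Fin k → Finset (Fin n)) (ctr : Fin k → Fin n),
    TriGalaxyDecomp T θ A B C Q ctr (fun i => ({A i, C i} : Finset (Fin n)))

/-- `T` is a left triangular galaxy: left exteriors of triangles may lie between leaves. -/
def IsLeftTriangularGalaxy (T : Tournament n) : Prop :=
  ∃ (θ : Equiv.Perm (Fin n)) (l k : ℕ) (A B C : Fin l → Fin n)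
    (Q : Fin k → Finset (Fin n)) (ctr : Fin k → Fin n),
    TriGalaxyDecomp T θ A B C Q ctr (fun i => ({B i, C i} : Finset (Fin n)))

/-- `T` is a right triangular galaxy: right exteriors of triangles may lie between leaves. -/
def IsRightTriangularGalaxy (T : Tournament n) : Prop :=
  ∃ (θ : Equiv.Perm (Fin n)) (l k : ℕ) (A B C : Fin l → Fin n)
    (Q : Fin k → Finset (Fin n)) (ctr : Fin k → Fin n),
    TriGalaxyDecomp T θ A B C Q ctr (fun i => ({A i, B i} : Finset (Fin n)))

/-- A decomposition of `T` witnessing that `T` is a nebula under `θ` (no condition on the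
location of the centers of the stars). -/
def NebulaDecomp (T : Tournament n) (θ : Equiv.Perm (Fin n)) {k : ℕ}
    (Q : Fin k → Finset (Fin n)) (ctr : Fin k → Fin n) : Prop :=
  (∀ i, T.IsStarAt θ (Q i) (ctr i)) ∧
  (∀ i j, i ≠ j → Disjoint (Q i) (Q j)) ∧
  (∀ u v, T.Backward θ u v → ∃ i, u ∈ Q i ∧ v ∈ Q i)

/-- `T` is a central nebula: a nebula all of whose stars are 3-vertex middle stars. -/
def IsCentralNebula (T : Tournament n) : Prop :=
  ∃ (θ : Equiv.Perm (Fin n)) (k : ℕ) (Q : Fin k → Finset (Fin n)) (ctr : Fin k → Fin n),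
    NebulaDecomp T θ Q ctr ∧ ∀ i, T.IsMiddleStarAt θ (Q i) (ctr i) ∧ (Q i).card = 3

/-- `T` is a super left nebula: a nebula all of whose stars are left stars. -/
def IsSuperLeftNebula (T : Tournament n) : Prop :=
  ∃ (θ : Equiv.Perm (Fin n)) (k : ℕ) (Q : Fin k → Finset (Fin n)) (ctr : Fin k → Fin n),
    NebulaDecomp T θ Q ctr ∧ ∀ i, T.IsLeftStarAt θ (Q i) (ctr i)

/-- `T` is a super right nebula: a nebula all of whose stars are right stars. -/
def IsSuperRightNebula (T : Tournament n) : Prop :=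
  ∃ (θ : Equiv.Perm (Fin n)) (k : ℕ) (Q : Fin k → Finset (Fin n)) (ctr : Fin k → Fin n),
    NebulaDecomp T θ Q ctr ∧ ∀ i, T.IsRightStarAt θ (Q i) (ctr i)

/-- `T` is an LR-Δgalaxy: a super Δgalaxy in which only the two exteriors of the triangle
may lie between leaves of a star. -/
def IsLRDeltaGalaxy (T : Tournament n) : Prop :=
  ∃ (θ : Equiv.Perm (Fin n)) (a b c : Fin n) (k : ℕ)
    (Q : Fin k → Finset (Fin n)) (ctr : Fin k → Fin n),
    TriGalaxyDecomp T θ (fun _ : Fin 1 => a) (fun _ => b) (fun _ => c) Q ctr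
      (fun _ => ({b} : Finset (Fin n)))

/-- `T` is a CR-Δgalaxy. -/
def IsCRDeltaGalaxy (T : Tournament n) : Prop :=
  ∃ (θ : Equiv.Perm (Fin n)) (a b c : Fin n) (k : ℕ)
    (Q : Fin k → Finset (Fin n)) (ctr : Fin k → Fin n),
    TriGalaxyDecomp T θ (fun _ : Fin 1 => a) (fun _ => b) (fun _ => c) Q ctr
      (fun _ => ({a} : Finset (Fin n))) ∧
    (∀ i j, i ≠ j → BetweenSet θ ((Q i).erase (ctr i)) b →
      BetweenSet θ ((Q j).erase (ctr j)) c →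
      (∀ x ∈ (Q i).erase (ctr i), ¬ BetweenSet θ ((Q j).erase (ctr j)) x) ∧
      (∀ x ∈ (Q j).erase (ctr j), ¬ BetweenSet θ ((Q i).erase (ctr i)) x)) ∧
    (∀ i, BetweenSet θ ((Q i).erase (ctr i)) b → ¬ BetweenSet θ ((Q i).erase (ctr i)) c)

/-- `T` is a CL-Δgalaxy. -/
def IsCLDeltaGalaxy (T : Tournament n) : Prop :=
  ∃ (θ : Equiv.Perm (Fin n)) (a b c : Fin n) (k : ℕ)
    (Q : Fin k → Finset (Fin n)) (ctr : Fin k → Fin n),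
    TriGalaxyDecomp T θ (fun _ : Fin 1 => a) (fun _ => b) (fun _ => c) Q ctr
      (fun _ => ({c} : Finset (Fin n))) ∧
    (∀ i j, i ≠ j → BetweenSet θ ((Q i).erase (ctr i)) b →
      BetweenSet θ ((Q j).erase (ctr j)) a →
      (∀ x ∈ (Q i).erase (ctr i), ¬ BetweenSet θ ((Q j).erase (ctr j)) x) ∧
      (∀ x ∈ (Q j).erase (ctr j), ¬ BetweenSet θ ((Q i).erase (ctr i)) x)) ∧
    (∀ i, BetweenSet θ ((Q i).erase (ctr i)) b → ¬ BetweenSet θ ((Q i).erase (ctr i)) a)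

/-- A decomposition of `T` under `θ` into one super 2-nebula (of kind `kd`) and frontier
stars, covering all of `V(T)`, witnessing that `T` is a Σ-galaxy under `θ`. -/
def SigmaGalaxyDecomp (T : Tournament n) (θ : Equiv.Perm (Fin n))
    (S : Finset (Fin n)) (c₁ c₂ : Fin n) (L₁ L₂ : Finset (Fin n)) (kd : NebKind)
    {m : ℕ} (Q : Fin m → Finset (Fin n)) (ctr : Fin m → Fin n) : Prop :=
  T.IsSuper2NebulaAt θ S c₁ c₂ L₁ L₂ kd ∧
  (∀ j, T.IsFrontierStarAt θ (Q j) (ctr j)) ∧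
  (∀ i j, i ≠ j → Disjoint (Q i) (Q j)) ∧
  (∀ j, Disjoint S (Q j)) ∧
  (∀ v, v ∈ S ∨ ∃ j, v ∈ Q j) ∧
  (∀ u v, T.Backward θ u v → (u ∈ S ∧ v ∈ S) ∨ ∃ j, u ∈ Q j ∧ v ∈ Q j) ∧
  (∀ j, ¬ BetweenSet θ (L₁ ∪ L₂) (ctr j)) ∧
  (∀ j, ¬ BetweenSet θ ((Q j).erase (ctr j)) c₁ ∧ ¬ BetweenSet θ ((Q j).erase (ctr j)) c₂) ∧
  (∀ i j, i ≠ j → ¬ BetweenSet θ ((Q j).erase (ctr j)) (ctr i))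

def IsMiddleSigmaGalaxy (T : Tournament n) : Prop :=
  ∃ (θ : Equiv.Perm (Fin n)) (S : Finset (Fin n)) (c₁ c₂ : Fin n) (L₁ L₂ : Finset (Fin n))
    (m : ℕ) (Q : Fin m → Finset (Fin n)) (ctr : Fin m → Fin n),
    SigmaGalaxyDecomp T θ S c₁ c₂ L₁ L₂ NebKind.middle Q ctr

def IsLeftSigmaGalaxy (T : Tournament n) : Prop :=
  ∃ (θ : Equiv.Perm (Fin n)) (S : Finset (Fin n)) (c₁ c₂ : Fin n) (L₁ L₂ : Finset (Fin n))
    (m : ℕ) (Q : Fin m → Finset (Fin n)) (ctr : Fin m → Fin n),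
    SigmaGalaxyDecomp T θ S c₁ c₂ L₁ L₂ NebKind.left Q ctr

def IsRightSigmaGalaxy (T : Tournament n) : Prop :=
  ∃ (θ : Equiv.Perm (Fin n)) (S : Finset (Fin n)) (c₁ c₂ : Fin n) (L₁ L₂ : Finset (Fin n))
    (m : ℕ) (Q : Fin m → Finset (Fin n)) (ctr : Fin m → Fin n),
    SigmaGalaxyDecomp T θ S c₁ c₂ L₁ L₂ NebKind.right Q ctr

/-- The directed density from `X` to `Y`. -/
noncomputable def density (T : Tournament n) (X Y : Finset (Fin n)) : ℝ :=
  (Set.ncard {p : Fin n × Fin n | p.1 ∈ X ∧ p.2 ∈ Y ∧ T.adj p.1 p.2} : ℝ) /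
    ((X.card : ℝ) * (Y.card : ℝ))

/-- `(S i)` is a smooth `(c, lam, w)`-structure of `T`. -/
def IsSmoothStructure (T : Tournament n) (c lam : ℝ) {N : ℕ} (w : Fin N → Bool)
    (S : Fin N → Finset (Fin n)) : Prop :=
  (∀ i j, i ≠ j → Disjoint (S i) (S j)) ∧
  (∀ i, w i = false → c * (n : ℝ) ≤ ((S i).card : ℝ)) ∧
  (∀ i, w i = true → T.IsTransOn (S i) ∧ c * (T.trSize : ℝ) ≤ ((S i).card : ℝ)) ∧
  (∀ i j, i < j →
    (∀ v ∈ S i, 1 - lam ≤ T.density {v} (S j)) ∧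
    (∀ v ∈ S j, 1 - lam ≤ T.density (S i) {v}))

end Tournament

/-- The backward arcs of `K₆` under its canonical ordering. -/
def K6back : List (ℕ × ℕ) := [(3, 0), (5, 2), (5, 0), (4, 1)]

/-- The tournament `K₆`, on `Fin 6` with its canonical ordering. -/
def K6 : Tournament 6 where
  adj u v := (u.val, v.val) ∈ K6back ∨ (u < v ∧ (v.val, u.val) ∉ K6back)
  asymm := by decide
  total := by decide

/-- The pair `{H₁, H₂}` satisfies the Erdős–Hajnal conjecture: there is `ε > 0` such that
every `{H₁, H₂}`-free tournament `T` has a transitive subtournament of size `≥ |T| ^ ε`. -/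
def EHPair {n₁ n₂ : ℕ} (H₁ : Tournament n₁) (H₂ : Tournament n₂) : Prop :=
  ∃ ε : ℝ, 0 < ε ∧ ∀ (n : ℕ) (T : Tournament n),
    ¬ T.Contains H₁ → ¬ T.Contains H₂ → (n : ℝ) ^ ε ≤ (T.trSize : ℝ)

open Tournament

namespace Tournament

lemma trBddAbove {n : ℕ} (T : Tournament n) (s : Finset (Fin n)) :
    BddAbove {k | ∃ u, u ⊆ s ∧ T.IsTransOn u ∧ u.card = k} := by
  refine ⟨n, ?_⟩
  rintro k ⟨u, -, -, rfl⟩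
  simpa using Finset.card_le_card (Finset.subset_univ u)

lemma le_trSizeOn {n : ℕ} (T : Tournament n) {s u : Finset (Fin n)}
    (hu : u ⊆ s) (htr : T.IsTransOn u) : u.card ≤ T.trSizeOn s :=
  le_csSup (T.trBddAbove s) ⟨u, hu, htr, rfl⟩

lemma trSizeOn_achieved {n : ℕ} (T : Tournament n) (s : Finset (Fin n)) :
    ∃ u, u ⊆ s ∧ T.IsTransOn u ∧ u.card = T.trSizeOn s := by
  have hne : {k | ∃ u, u ⊆ s ∧ T.IsTransOn u ∧ u.card = k}.Nonempty :=
    ⟨0, ∅, by simp, fun u hu => by simp at hu, rfl⟩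
  exact Nat.sSup_mem hne (T.trBddAbove s)

lemma transUnion {n : ℕ} (T : Tournament n) {B W : Finset (Fin n)}
    (hB : T.IsTransOn B) (hW : T.IsTransOn W)
    (hall : ∀ u ∈ B, ∀ v ∈ W, T.adj u v) : T.IsTransOn (B ∪ W) := by
  have hWB : ∀ x ∈ W, ∀ y ∈ B, ¬ T.adj x y := fun x hx y hy h => T.asymm y x (hall y hy x hx) h
  intro u hu v hv w hw huv hvw
  rcases Finset.mem_union.1 hu with hu | hu <;>
  rcases Finset.mem_union.1 hv with hv | hv <;>
  rcases Finset.mem_union.1 hw with hw | hw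
  · exact hB u hu v hv w hw huv hvw
  · exact hall u hu w hw
  · exact absurd hvw (hWB v hv w hw)
  · exact hall u hu w hw
  · exact absurd huv (hWB u hu v hv)
  · exact absurd huv (hWB u hu v hv)
  · exact absurd hvw (hWB v hv w hw)
  · exact hW u hu v hv w hw huv hvw

lemma helper {n : ℕ} (T : Tournament n) {ε b r : ℝ} (hε : 0 < ε)
    (hb : 0 < b) (hb1 : b < 1) (hr1 : r < 1)
    (hεr : ε < Real.logb b (1 - r)) (hT : T.EpsCritical ε)
    (X B : Finset (Fin n)) (hXne : X ≠ Finset.univ) (hdisj : Disjoint B X)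
    (hBtrans : T.IsTransOn B) (hBcard : r * (T.trSize : ℝ) ≤ (B.card : ℝ))
    (hunion : ∀ W ⊆ X, T.IsTransOn W → T.IsTransOn (B ∪ W))
    (hXcard : b * (n : ℝ) ≤ (X.card : ℝ)) : False := by
  have hn : n ≠ 0 := by
    rintro rfl
    have h1 := hT.1
    rw [Nat.cast_zero, Real.zero_rpow hε.ne'] at h1
    exact absurd h1 (not_lt.2 (Nat.cast_nonneg _))
  have hnpos : (0 : ℝ) < (n : ℝ) := by exact_mod_cast Nat.pos_of_ne_zero hn
  obtain ⟨W, hWX, hWtr, hWcard⟩ := T.trSizeOn_achieved X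
  have h1 : ((X.card : ℝ)) ^ ε ≤ (W.card : ℝ) := by
    rw [hWcard]; exact hT.2 X hXne
  have h2 : ((B ∪ W).card : ℝ) ≤ (T.trSize : ℝ) := by
    exact_mod_cast T.le_trSizeOn (Finset.subset_univ _) (hunion W hWX hWtr)
  have hcard : ((B ∪ W).card : ℝ) = (B.card : ℝ) + (W.card : ℝ) := by
    rw [Finset.card_union_of_disjoint (hdisj.mono_right hWX)]; push_cast; ring
  have htrlt := hT.1
  have hnε : (0 : ℝ) < (n : ℝ) ^ ε := Real.rpow_pos_of_pos hnpos ε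
  have h3 : ((X.card : ℝ)) ^ ε < (1 - r) * (n : ℝ) ^ ε := by
    have hXle : ((X.card : ℝ)) ^ ε ≤ (1 - r) * (T.trSize : ℝ) := by nlinarith
    have : (1 - r) * (T.trSize : ℝ) < (1 - r) * (n : ℝ) ^ ε :=
      mul_lt_mul_of_pos_left htrlt (by linarith)
    linarith
  have h4 : (b * (n : ℝ)) ^ ε ≤ ((X.card : ℝ)) ^ ε :=
    Real.rpow_le_rpow (by positivity) hXcard hε.le
  rw [Real.mul_rpow hb.le hnpos.le] at h4
  have h5 : b ^ ε < 1 - r := by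
    have := lt_of_le_of_lt h4 h3
    exact lt_of_mul_lt_mul_right this hnε.le
  have hbε : (0 : ℝ) < b ^ ε := Real.rpow_pos_of_pos hb ε
  have h6 : ε * Real.log b < Real.log (1 - r) := by
    have := Real.log_lt_log hbε h5
    rwa [Real.log_rpow hb] at this
  have hlogb : Real.log b < 0 := Real.log_neg hb hb1
  have h7 : Real.logb b (1 - r) < ε := by
    rw [Real.logb, div_lt_iff_of_neg hlogb]
    linarith
  linarith

end Tournament

theorem stmt11 (m t : ℕ) (hmt : 1 ≤ m + t) (f : Fin m → ℝ) (lv : Fin t → ℝ) (c ε : ℝ)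
    (hf : ∀ i, 0 < f i ∧ f i < 1) (hl : ∀ j, 0 < lv j ∧ lv j < 1)
    (hc : 0 < c ∧ c < 1) (hε : 0 < ε)
    (hεf : ∀ i, ε < Real.logb (c / (2 * ((m : ℝ) + (t : ℝ)))) (1 - f i))
    (hεl : ∀ j, ε < Real.logb (c / (2 * ((m : ℝ) + (t : ℝ)))) (1 - lv j))
    {n : ℕ} (T : Tournament n) (hT : T.EpsCritical ε)
    (S : Fin m → Finset (Fin n)) (P : Fin t → Finset (Fin n))
    (hSdisj : ∀ i j, i ≠ j → Disjoint (S i) (S j))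
    (hPdisj : ∀ i j, i ≠ j → Disjoint (P i) (P j))
    (hSPdisj : ∀ i j, Disjoint (S i) (P j))
    (hStrans : ∀ i, T.IsTransOn (S i)) (hPtrans : ∀ j, T.IsTransOn (P j))
    (hScard : ∀ i, f i * (T.trSize : ℝ) ≤ ((S i).card : ℝ))
    (hPcard : ∀ j, lv j * (T.trSize : ℝ) ≤ ((P j).card : ℝ))
    (A : Finset (Fin n))
    (hAS : ∀ i, Disjoint A (S i)) (hAP : ∀ j, Disjoint A (P j))
    (hAcard : c * (n : ℝ) ≤ (A.card : ℝ)) :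
    ∃ g ∈ A, (∀ i, ∃ s ∈ S i, T.adj g s) ∧ (∀ j, ∃ p ∈ P j, T.adj p g) := by
  by_contra hcon
  push_neg at hcon
  -- basic facts
  have hn : n ≠ 0 := by
    rintro rfl
    have h1 := hT.1
    rw [Nat.cast_zero, Real.zero_rpow hε.ne'] at h1
    exact absurd h1 (not_lt.2 (Nat.cast_nonneg _))
  have hnpos : (0 : ℝ) < (n : ℝ) := by exact_mod_cast Nat.pos_of_ne_zero hn
  have htr1 : (1 : ℝ) ≤ (T.trSize : ℝ) := by
    have : ({⟨0, Nat.pos_of_ne_zero hn⟩} : Finset (Fin n)).card ≤ T.trSize :=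
      T.le_trSizeOn (Finset.subset_univ _) (by
        intro u hu v hv w hw huv hvw
        simp only [Finset.mem_singleton] at hu hv hw
        subst hu; subst hv; subst hw; exact huv)
    simpa using (by exact_mod_cast this : (1 : ℝ) ≤ (T.trSize : ℝ))
  set D : ℝ := (m : ℝ) + (t : ℝ) with hD
  have hD1 : (1 : ℝ) ≤ D := by
    have : (1 : ℝ) ≤ ((m + t : ℕ) : ℝ) := by exact_mod_cast hmt
    push_cast at this; linarith
  have hDpos : (0 : ℝ) < D := by linarith
  set b : ℝ := c / (2 * D) with hbdef
  have hb : 0 < b := div_pos hc.1 (by linarith)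
  have hb1 : b < 1 := by
    rw [hbdef, div_lt_one (by linarith)]
    linarith [hc.2]
  -- classification of vertices of A
  have key : ∀ g ∈ A, ∃ y : Fin m ⊕ Fin t,
      Sum.elim (fun i => ∀ s ∈ S i, T.adj s g) (fun j => ∀ p ∈ P j, T.adj g p) y := by
    intro g hg
    by_cases hfor : ∀ i, ∃ s ∈ S i, T.adj g s
    · obtain ⟨j, hj⟩ := hcon g hg hfor
      refine ⟨Sum.inr j, fun p hp => ?_⟩
      have hne : g ≠ p := by
        rintro rfl
        exact (Finset.disjoint_left.1 (hAP j)) hg hp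
      rcases T.total g p hne with h | h
      · exact h
      · exact absurd h (hj p hp)
    · push_neg at hfor
      obtain ⟨i, hi⟩ := hfor
      refine ⟨Sum.inl i, fun s hs => ?_⟩
      have hne : s ≠ g := by
        rintro rfl
        exact (Finset.disjoint_left.1 (hAS i)) hg hs
      rcases T.total s g hne with h | h
      · exact h
      · exact absurd h (hi s hs)
  have hne : Nonempty (Fin m ⊕ Fin t) := by
    rcases Nat.lt_or_ge 0 m with hm | hm
    · exact ⟨Sum.inl ⟨0, hm⟩⟩
    · have : 0 < t := by omega
      exact ⟨Sum.inr ⟨0, this⟩⟩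
  classical
  set φ : Fin n → Fin m ⊕ Fin t := fun g =>
    if hg : g ∈ A then (key g hg).choose else Classical.arbitrary _ with hφ
  have φspec : ∀ g (hg : g ∈ A),
      Sum.elim (fun i => ∀ s ∈ S i, T.adj s g) (fun j => ∀ p ∈ P j, T.adj g p) (φ g) := by
    intro g hg
    simp only [hφ, dif_pos hg]
    exact (key g hg).choose_spec
  -- pigeonhole
  have hsplit : (A.card : ℝ) =
      ∑ y : Fin m ⊕ Fin t, ((A.filter fun g => φ g = y).card : ℝ) := by
    rw [← Nat.cast_sum]
    exact_mod_cast Finset.card_eq_sum_card_fiberwise (fun x _ => Finset.mem_univ (φ x))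
  obtain ⟨y, -, hy⟩ : ∃ y ∈ (Finset.univ : Finset (Fin m ⊕ Fin t)),
      (A.card : ℝ) / D ≤ ((A.filter fun g => φ g = y).card : ℝ) := by
    apply Finset.exists_le_of_sum_le Finset.univ_nonempty
    rw [← hsplit, Finset.sum_const, Finset.card_univ]
    have hcard : (Fintype.card (Fin m ⊕ Fin t) : ℝ) = D := by
      simp [hD]
    rw [nsmul_eq_mul, hcard, mul_div_cancel₀ _ hDpos.ne']
  set X : Finset (Fin n) := A.filter fun g => φ g = y with hX
  have hXA : X ⊆ A := Finset.filter_subset _ _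
  have hXcard : b * (n : ℝ) ≤ (X.card : ℝ) := by
    have h1 : (A.card : ℝ) ≤ (X.card : ℝ) * D := by
      rw [← div_le_iff₀ hDpos] at *
      linarith [hy]
    have hXnn : (0 : ℝ) ≤ (X.card : ℝ) := Nat.cast_nonneg _
    rw [hbdef, div_mul_eq_mul_div, div_le_iff₀ (by linarith : (0:ℝ) < 2 * D)]
    nlinarith [hAcard]
  -- case analysis
  rcases y with i | j
  · -- dominated by S i
    have hSipos : (S i).Nonempty := by
      rw [← Finset.card_pos]
      have : (0 : ℝ) < ((S i).card : ℝ) := lt_of_lt_of_le (by nlinarith [(hf i).1]) (hScard i)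
      exact_mod_cast this
    obtain ⟨s0, hs0⟩ := hSipos
    have hXne : X ≠ Finset.univ := by
      intro h
      exact (Finset.disjoint_left.1 (hAS i)) (hXA (h ▸ Finset.mem_univ s0)) hs0
    refine T.helper hε hb hb1 (by linarith [(hf i).2]) (hεf i) hT X (S i) hXne
      ((hAS i).symm.mono_right hXA) (hStrans i) (hScard i) ?_ hXcard
    intro W hWX hWtr
    refine T.transUnion (hStrans i) hWtr ?_
    intro u hu v hv
    have hvA := hXA (hWX hv)
    have hvφ : φ v = Sum.inl i := (Finset.mem_filter.1 (hWX hv)).2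
    have := φspec v hvA
    rw [hvφ] at this
    exact this u hu
  · -- dominating P j
    have hPjpos : (P j).Nonempty := by
      rw [← Finset.card_pos]
      have : (0 : ℝ) < ((P j).card : ℝ) := lt_of_lt_of_le (by nlinarith [(hl j).1]) (hPcard j)
      exact_mod_cast this
    obtain ⟨p0, hp0⟩ := hPjpos
    have hXne : X ≠ Finset.univ := by
      intro h
      exact (Finset.disjoint_left.1 (hAP j)) (hXA (h ▸ Finset.mem_univ p0)) hp0
    refine T.helper hε hb hb1 (by linarith [(hl j).2]) (hεl j) hT X (P j) hXne
      ((hAP j).symm.mono_right hXA) (hPtrans j) (hPcard j) ?_ hXcard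
    intro W hWX hWtr
    rw [Finset.union_comm]
    refine T.transUnion hWtr (hPtrans j) ?_
    intro u hu v hv
    have huA := hXA (hWX hu)
    have huφ : φ u = Sum.inr j := (Finset.mem_filter.1 (hWX hu)).2
    have := φspec u huA
    rw [huφ] at this
    exact this v hv
end

section
/- Let f, c, ε be real constants with 0 < f < 1 and 0 < c < 1, let t be a positive integer, let m be an integer with 0 ≤ m ≤ t, and suppose 0 < ε < min{ log_{c/(2t)}(1−f), log_{c/4}(1/2) }. Let T be an ε-critical tournament with |T| = n, let S_1,…,S_t be pairwise vertex-disjoint transitive induced subtournaments of T with |S_i| ≥ f·tr(T) for i = 1,…,t, and let A_1, A_2 be disjoint subsets of V(T) \ (V(S_1) ∪ … ∪ V(S_t)) with |A_1| ≥ cn and |A_2| ≥ cn. Then: (1) there exist x ∈ A_1, y ∈ A_2 and s_i ∈ V(S_i) for i = 1,…,t such that (y,x) is an arc of T, (s_i,x) is an arc of T for i = 1,…,m, and (y,s_i) is an arc of T for i = m+1,…,t; (2) there exist p ∈ A_1, q ∈ A_2 and u_i ∈ V(S_i) for i = 1,…,t such that (q,u_i) is an arc of T for i = 1,…,m, (q,p)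 is an arc of T, and (p,u_i) is an arc of T for i = m+1,…,t; (3) there exist g ∈ A_1, v ∈ A_2 and z_i ∈ V(S_i) for i = 1,…,t such that (v,g) is an arc of T, (z_i,g) is an arc of T for i = 1,…,m, and (z_i,v) is an arc of T for i = m+1,…,t. -/
open Finset

open Tournament

section Helpers

variable {n : ℕ}

lemma trans_union_aux (T : Tournament n) {D E : Finset (Fin n)} (hD : T.IsTransOn D)
    (hE : T.IsTransOn E) (harc : ∀ d ∈ D, ∀ e ∈ E, T.adj d e) :
    T.IsTransOn (D ∪ E) := by
  intro u hu v hv w hw huv hvw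
  simp only [Finset.mem_union] at hu hv hw
  rcases hu with hu | hu <;> rcases hv with hv | hv <;> rcases hw with hw | hw
  · exact hD u hu v hv w hw huv hvw
  · exact harc u hu w hw
  · exact absurd hvw (T.asymm w v (harc w hw v hv))
  · exact harc u hu w hw
  · exact absurd huv (T.asymm v u (harc v hv u hu))
  · exact absurd huv (T.asymm v u (harc v hv u hu))
  · exact absurd hvw (T.asymm w v (harc w hw v hv))
  · exact hE u hu v hv w hw huv hvw

lemma trans_le_trSize_aux (T : Tournament n) {u : Finset (Fin n)} (hu : T.IsTransOn u) :
    u.card ≤ T.trSize := by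
  apply le_csSup
  · exact ⟨n, by rintro k ⟨v, -, -, rfl⟩; exact (Finset.card_le_univ v).trans (by simp)⟩
  · exact ⟨u, Finset.subset_univ u, hu, rfl⟩

lemma exists_trans_aux (T : Tournament n) (s : Finset (Fin n)) :
    ∃ u, u ⊆ s ∧ T.IsTransOn u ∧ u.card = T.trSizeOn s := by
  have h := Nat.sSup_mem
    (s := {k | ∃ u, u ⊆ s ∧ T.IsTransOn u ∧ u.card = k})
    ⟨0, ∅, Finset.empty_subset s, fun u hu => absurd hu (Finset.notMem_empty u),
      Finset.card_empty⟩
    ⟨n, by rintro k ⟨v, -, -, rfl⟩; exact (Finset.card_le_univ v).trans (by simp)⟩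
  exact h

lemma rpow_gt_of_lt_logb {b y ε : ℝ} (hb0 : 0 < b) (hb1 : b < 1) (hy0 : 0 < y)
    (hε : ε < Real.logb b y) : y < b ^ ε := by
  have hlb : Real.log b < 0 := Real.log_neg hb0 hb1
  rw [Real.logb] at hε
  rw [lt_div_iff_of_neg hlb] at hε
  calc y = Real.exp (Real.log y) := (Real.exp_log hy0).symm
    _ < Real.exp (Real.log b * ε) := Real.exp_lt_exp.mpr (by linarith)
    _ = b ^ ε := (Real.rpow_def_of_pos hb0 ε).symm

end Helpers

theorem stmt12 (f c ε : ℝ) (hf : 0 < f ∧ f < 1) (hc : 0 < c ∧ c < 1)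
    (t : ℕ) (ht : 0 < t) (m : ℕ) (hm : m ≤ t) (hε : 0 < ε)
    (hε1 : ε < Real.logb (c / (2 * (t : ℝ))) (1 - f))
    (hε2 : ε < Real.logb (c / 4) (1 / 2))
    {n : ℕ} (T : Tournament n) (hT : T.EpsCritical ε)
    (S : Fin t → Finset (Fin n)) (hdisj : ∀ i j, i ≠ j → Disjoint (S i) (S j))
    (htrans : ∀ i, T.IsTransOn (S i))
    (hcard : ∀ i, f * (T.trSize : ℝ) ≤ ((S i).card : ℝ))
    (A₁ A₂ : Finset (Fin n)) (hA₁₂ : Disjoint A₁ A₂)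
    (hA₁S : ∀ i, Disjoint A₁ (S i)) (hA₂S : ∀ i, Disjoint A₂ (S i))
    (hA₁ : c * (n : ℝ) ≤ (A₁.card : ℝ)) (hA₂ : c * (n : ℝ) ≤ (A₂.card : ℝ)) :
    (∃ x ∈ A₁, ∃ y ∈ A₂, T.adj y x ∧
      (∀ i : Fin t, i.val < m → ∃ s ∈ S i, T.adj s x) ∧
      (∀ i : Fin t, m ≤ i.val → ∃ s ∈ S i, T.adj y s)) ∧
    (∃ p ∈ A₁, ∃ q ∈ A₂, T.adj q p ∧
      (∀ i : Fin t, i.val < m → ∃ u ∈ S i, T.adj q u) ∧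
      (∀ i : Fin t, m ≤ i.val → ∃ u ∈ S i, T.adj p u)) ∧
    (∃ g ∈ A₁, ∃ v ∈ A₂, T.adj v g ∧
      (∀ i : Fin t, i.val < m → ∃ z ∈ S i, T.adj z g) ∧
      (∀ i : Fin t, m ≤ i.val → ∃ z ∈ S i, T.adj z v)) := by
  classical
  have hn0 : 0 < n := by
    rcases Nat.eq_zero_or_pos n with h | h
    · exfalso
      subst h
      have h1 := hT.1
      rw [Nat.cast_zero, Real.zero_rpow hε.ne'] at h1
      exact absurd h1 (not_lt.mpr (Nat.cast_nonneg _))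
    · exact h
  have hnR : (0:ℝ) < n := by exact_mod_cast hn0
  have htR : (0:ℝ) < t := by exact_mod_cast ht
  have htR1 : (1:ℝ) ≤ t := by exact_mod_cast ht
  have htr1 : 1 ≤ T.trSize := by
    have htrans1 : T.IsTransOn {(⟨0, hn0⟩ : Fin n)} := by
      intro u hu v hv w hw h1 h2
      simp only [Finset.mem_singleton] at hu hv hw
      subst hu; subst hv; subst hw
      exact h1
    have h := trans_le_trSize_aux T htrans1
    simpa using h
  have htr1R : (1:ℝ) ≤ T.trSize := by exact_mod_cast htr1
  have hnε : (0:ℝ) < (n:ℝ) ^ ε := Real.rpow_pos_of_pos hnR ε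
  have hcn2 : (0:ℝ) < c * n / 2 := by nlinarith [mul_pos hc.1 hnR]
  have hb1 : (0:ℝ) < c / (2*t) := div_pos hc.1 (by linarith)
  have hb1lt : c / (2*t) < 1 := by
    rw [div_lt_one (by linarith : (0:ℝ) < 2*t)]
    linarith [hc.2]
  have hb2 : (0:ℝ) < c/4 := div_pos hc.1 (by norm_num)
  have hb2lt : c/4 < 1 := by
    rw [div_lt_one (by norm_num)]
    linarith [hc.2]
  have key1 : (1 - f) < (c/(2*t)) ^ ε := rpow_gt_of_lt_logb hb1 hb1lt (by linarith [hf.2]) hε1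
  have key2 : (1/2 : ℝ) < (c/4) ^ ε := rpow_gt_of_lt_logb hb2 hb2lt one_half_pos hε2
  have hSne : ∀ i, (S i).Nonempty := by
    intro i
    have h1 : (0:ℝ) < ((S i).card : ℝ) :=
      lt_of_lt_of_le (by nlinarith [hf.1, htr1R]) (hcard i)
    exact Finset.card_pos.mp (by exact_mod_cast h1)
  -- L1 : a set fully dominating or fully dominated by some S i is small
  have L1 : ∀ (i : Fin t) (W : Finset (Fin n)), Disjoint W (S i) →
      ((∀ x ∈ W, ∀ s ∈ S i, T.adj x s) ∨ (∀ x ∈ W, ∀ s ∈ S i, T.adj s x)) →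
      (W.card : ℝ) < c/(2*t) * n := by
    intro i W hWd hor
    by_contra hcard'
    push_neg at hcard'
    have hWne : W ≠ Finset.univ := by
      intro h
      obtain ⟨s0, hs0⟩ := hSne i
      exact (Finset.disjoint_left.mp hWd (h ▸ Finset.mem_univ s0)) hs0
    have hcrit := hT.2 W hWne
    obtain ⟨D, hDW, hDtr, hDcard⟩ := exists_trans_aux T W
    have e1 : ((c/(2*t)) * n : ℝ) ^ ε ≤ (W.card : ℝ) ^ ε :=
      Real.rpow_le_rpow (mul_nonneg hb1.le (Nat.cast_nonneg n)) hcard' hε.le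
    have e2 : ((c/(2*t)) * n : ℝ) ^ ε = (c/(2*t)) ^ ε * (n:ℝ) ^ ε :=
      Real.mul_rpow hb1.le (Nat.cast_nonneg n)
    have e3 : (1-f) * (n:ℝ) ^ ε < (c/(2*t)) ^ ε * (n:ℝ) ^ ε :=
      mul_lt_mul_of_pos_right key1 hnε
    have e4 : (1-f) * (T.trSize : ℝ) < (1-f) * (n:ℝ) ^ ε :=
      mul_lt_mul_of_pos_left hT.1 (by linarith [hf.2])
    have hDc : (D.card : ℝ) = (T.trSizeOn W : ℝ) := by exact_mod_cast hDcard
    have hDbig : (1-f) * (T.trSize : ℝ) < (D.card : ℝ) := by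
      have h5 : (W.card:ℝ)^ε ≤ (T.trSizeOn W : ℝ) := hcrit
      linarith
    have hDdisj : Disjoint D (S i) := Finset.disjoint_of_subset_left hDW hWd
    have htransU : T.IsTransOn (D ∪ S i) := by
      rcases hor with hor | hor
      · exact trans_union_aux T hDtr (htrans i) (fun d hd s hs => hor d (hDW hd) s hs)
      · have h6 := trans_union_aux T (htrans i) hDtr (fun s hs d hd => hor d (hDW hd) s hs)
        rw [Finset.union_comm]
        exact h6
    have hle := trans_le_trSize_aux T htransU
    have hcardU : (D ∪ S i).card = D.card + (S i).card :=
      Finset.card_union_of_disjoint hDdisj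
    have hleR : (D.card : ℝ) + ((S i).card : ℝ) ≤ (T.trSize : ℝ) := by
      exact_mod_cast hcardU ▸ hle
    have h7 := hcard i
    linarith
  -- bad-set bounds
  have hBadIn : ∀ (A : Finset (Fin n)), (∀ i, Disjoint A (S i)) → ∀ i : Fin t,
      ((A.filter (fun x => ¬ ∃ s ∈ S i, T.adj s x)).card : ℝ) ≤ c/(2*t) * n := by
    intro A hAS i
    refine le_of_lt (L1 i _ (Finset.disjoint_of_subset_left (Finset.filter_subset _ _) (hAS i))
      (Or.inl ?_))
    intro x hx s hs
    have hx' := Finset.mem_filter.mp hx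
    have hne : x ≠ s := fun h => (Finset.disjoint_left.mp (hAS i) hx'.1) (h ▸ hs)
    rcases T.total x s hne with h | h
    · exact h
    · exact absurd ⟨s, hs, h⟩ hx'.2
  have hBadOut : ∀ (A : Finset (Fin n)), (∀ i, Disjoint A (S i)) → ∀ i : Fin t,
      ((A.filter (fun x => ¬ ∃ s ∈ S i, T.adj x s)).card : ℝ) ≤ c/(2*t) * n := by
    intro A hAS i
    refine le_of_lt (L1 i _ (Finset.disjoint_of_subset_left (Finset.filter_subset _ _) (hAS i))
      (Or.inr ?_))
    intro x hx s hs
    have hx' := Finset.mem_filter.mp hx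
    have hne : s ≠ x := fun h => (Finset.disjoint_left.mp (hAS i) hx'.1) (h ▸ hs)
    rcases T.total s x hne with h | h
    · exact h
    · exact absurd ⟨s, hs, h⟩ hx'.2
  -- G : counting lemma
  have G : ∀ (A : Finset (Fin n)) (P : Fin t → Prop) (R : Fin n → Fin n → Prop),
      c * n ≤ (A.card : ℝ) →
      (∀ i : Fin t, ((A.filter (fun x => ¬ ∃ s ∈ S i, R s x)).card : ℝ) ≤ c/(2*t) * n) →
      ∃ F : Finset (Fin n), F ⊆ A ∧ c * n / 2 ≤ (F.card : ℝ) ∧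
        ∀ x ∈ F, ∀ i : Fin t, P i → ∃ s ∈ S i, R s x := by
    intro A P R hAc hbad
    set F := A.filter (fun x => ∀ i : Fin t, P i → ∃ s ∈ S i, R s x) with hF
    have hsub : A \ F ⊆ (Finset.univ.filter P).biUnion
        (fun i => A.filter (fun x => ¬ ∃ s ∈ S i, R s x)) := by
      intro x hx
      rw [Finset.mem_sdiff] at hx
      obtain ⟨hxA, hxF⟩ := hx
      have hnot : ¬ ∀ i : Fin t, P i → ∃ s ∈ S i, R s x := fun h =>
        hxF (Finset.mem_filter.mpr ⟨hxA, h⟩)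
      push_neg at hnot
      obtain ⟨i, hPi, hno⟩ := hnot
      refine Finset.mem_biUnion.mpr ⟨i, Finset.mem_filter.mpr ⟨Finset.mem_univ i, hPi⟩,
        Finset.mem_filter.mpr ⟨hxA, ?_⟩⟩
      push_neg
      exact hno
    have h1 : (A \ F).card ≤ ∑ i ∈ Finset.univ.filter P,
        (A.filter (fun x => ¬ ∃ s ∈ S i, R s x)).card :=
      le_trans (Finset.card_le_card hsub) Finset.card_biUnion_le
    have h1' : ((A \ F).card : ℝ) ≤ ∑ i ∈ Finset.univ.filter P,
        ((A.filter (fun x => ¬ ∃ s ∈ S i, R s x)).card : ℝ) := by exact_mod_cast h1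
    have h2' : (∑ i ∈ Finset.univ.filter P,
        ((A.filter (fun x => ¬ ∃ s ∈ S i, R s x)).card : ℝ)) ≤
        ((Finset.univ.filter P).card : ℝ) * (c/(2*t) * n) := by
      have := Finset.sum_le_card_nsmul (Finset.univ.filter P)
        (fun i => ((A.filter (fun x => ¬ ∃ s ∈ S i, R s x)).card : ℝ))
        (c/(2*t) * n) (fun i _ => hbad i)
      simpa [nsmul_eq_mul] using this
    have h3' : ((Finset.univ.filter P).card : ℝ) ≤ t := by
      exact_mod_cast (Finset.card_filter_le Finset.univ P).trans (by simp)
    have h2 : ((A \ F).card : ℝ) ≤ (t:ℝ) * (c/(2*t) * n) := by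
      have hx : ((Finset.univ.filter P).card : ℝ) * (c/(2*t) * n) ≤ (t:ℝ) * (c/(2*t) * n) :=
        mul_le_mul_of_nonneg_right h3' (mul_nonneg hb1.le (Nat.cast_nonneg n))
      linarith
    have heq : (t:ℝ) * (c/(2*t) * n) = c * n / 2 := by
      field_simp
    have h4 : (A \ F).card + F.card = A.card :=
      Finset.card_sdiff_add_card_eq_card (Finset.filter_subset _ _)
    have h4' : ((A \ F).card : ℝ) + (F.card : ℝ) = (A.card : ℝ) := by exact_mod_cast h4
    exact ⟨F, Finset.filter_subset _ _, by linarith,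
      fun x hx => (Finset.mem_filter.mp hx).2⟩
  -- L2 : arc from a big subset of A₂ to a big subset of A₁
  have L2 : ∀ X Y : Finset (Fin n), X ⊆ A₁ → Y ⊆ A₂ →
      c * n / 2 ≤ (X.card : ℝ) → c * n / 2 ≤ (Y.card : ℝ) →
      ∃ x ∈ X, ∃ y ∈ Y, T.adj y x := by
    intro X Y hXA hYA hXc hYc
    by_contra hcon
    push_neg at hcon
    have hXne : X.Nonempty := Finset.card_pos.mp (by
      exact_mod_cast lt_of_lt_of_le hcn2 hXc)
    have hYne : Y.Nonempty := Finset.card_pos.mp (by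
      exact_mod_cast lt_of_lt_of_le hcn2 hYc)
    obtain ⟨x0, hx0⟩ := hXne
    obtain ⟨y0, hy0⟩ := hYne
    have hXY : Disjoint X Y :=
      Finset.disjoint_of_subset_left hXA (Finset.disjoint_of_subset_right hYA hA₁₂)
    have harc : ∀ x ∈ X, ∀ y ∈ Y, T.adj x y := by
      intro x hx y hy
      have hne : x ≠ y := fun h => (Finset.disjoint_left.mp hXY hx) (h ▸ hy)
      rcases T.total x y hne with h | h
      · exact h
      · exact absurd h (hcon x hx y hy)
    have hXuniv : X ≠ Finset.univ := fun h =>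
      (Finset.disjoint_left.mp hXY (h ▸ Finset.mem_univ y0)) hy0
    have hYuniv : Y ≠ Finset.univ := fun h =>
      (Finset.disjoint_left.mp hXY hx0) (h ▸ Finset.mem_univ x0)
    have hkey : ∀ (Z : Finset (Fin n)), Z ≠ Finset.univ → c*n/2 ≤ (Z.card:ℝ) →
        (T.trSize : ℝ)/2 < (T.trSizeOn Z : ℝ) := by
      intro Z hZu hZc
      have hcrit := hT.2 Z hZu
      have e1 : (c*n/2 : ℝ) ^ ε ≤ (Z.card:ℝ)^ε :=
        Real.rpow_le_rpow hcn2.le hZc hε.le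
      have e2 : (c*n/2 : ℝ) = (c/2) * n := by ring
      rw [e2] at e1
      have e3 : ((c/2)*(n:ℝ)) ^ ε = (c/2)^ε * (n:ℝ)^ε :=
        Real.mul_rpow (by linarith [hc.1]) (Nat.cast_nonneg n)
      rw [e3] at e1
      have e4 : (c/4 : ℝ)^ε ≤ (c/2)^ε := Real.rpow_le_rpow hb2.le (by linarith) hε.le
      have e4' : (c/4 : ℝ)^ε * (n:ℝ)^ε ≤ (c/2)^ε * (n:ℝ)^ε :=
        mul_le_mul_of_nonneg_right e4 hnε.le
      have e5 : (1/2 : ℝ) * (n:ℝ)^ε < (c/4)^ε * (n:ℝ)^ε := mul_lt_mul_of_pos_right key2 hnε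
      have e6 : (T.trSize : ℝ) < (n:ℝ)^ε := hT.1
      linarith
    have hX2 := hkey X hXuniv hXc
    have hY2 := hkey Y hYuniv hYc
    obtain ⟨DX, hDXs, hDXtr, hDXcard⟩ := exists_trans_aux T X
    obtain ⟨DY, hDYs, hDYtr, hDYcard⟩ := exists_trans_aux T Y
    have htransU := trans_union_aux T hDXtr hDYtr
      (fun d hd e he => harc d (hDXs hd) e (hDYs he))
    have hdisjD : Disjoint DX DY :=
      Finset.disjoint_of_subset_left hDXs (Finset.disjoint_of_subset_right hDYs hXY)
    have hle := trans_le_trSize_aux T htransU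
    have hcardU : (DX ∪ DY).card = DX.card + DY.card := Finset.card_union_of_disjoint hdisjD
    have hsum : (DX.card : ℝ) + (DY.card : ℝ) ≤ (T.trSize : ℝ) := by
      exact_mod_cast hcardU ▸ hle
    have hXc' : (DX.card : ℝ) = (T.trSizeOn X : ℝ) := by exact_mod_cast hDXcard
    have hYc' : (DY.card : ℝ) = (T.trSizeOn Y : ℝ) := by exact_mod_cast hDYcard
    linarith
  -- the five large filtered sets
  obtain ⟨F1, hF1s, hF1c, hF1P⟩ :=
    G A₁ (fun i => i.val < m) (fun s x => T.adj s x) hA₁ (fun i => hBadIn A₁ hA₁S i)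
  obtain ⟨F2, hF2s, hF2c, hF2P⟩ :=
    G A₂ (fun i => m ≤ i.val) (fun s x => T.adj x s) hA₂ (fun i => hBadOut A₂ hA₂S i)
  obtain ⟨F3, hF3s, hF3c, hF3P⟩ :=
    G A₁ (fun i => m ≤ i.val) (fun s x => T.adj x s) hA₁ (fun i => hBadOut A₁ hA₁S i)
  obtain ⟨F4, hF4s, hF4c, hF4P⟩ :=
    G A₂ (fun i => i.val < m) (fun s x => T.adj x s) hA₂ (fun i => hBadOut A₂ hA₂S i)
  obtain ⟨F5, hF5s, hF5c, hF5P⟩ :=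
    G A₂ (fun i => m ≤ i.val) (fun s x => T.adj s x) hA₂ (fun i => hBadIn A₂ hA₂S i)
  refine ⟨?_, ?_, ?_⟩
  · obtain ⟨x, hx, y, hy, hadj⟩ := L2 F1 F2 hF1s hF2s hF1c hF2c
    exact ⟨x, hF1s hx, y, hF2s hy, hadj, hF1P x hx, hF2P y hy⟩
  · obtain ⟨p, hp, q, hq, hadj⟩ := L2 F3 F4 hF3s hF4s hF3c hF4c
    exact ⟨p, hF3s hp, q, hF4s hq, hadj, hF4P q hq, hF3P p hp⟩
  · obtain ⟨g, hg, v, hv, hadj⟩ := L2 F1 F5 hF1s hF5s hF1c hF5c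
    exact ⟨g, hF1s hg, v, hF5s hv, hadj, hF1P g hg, hF5P v hv⟩
end
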